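/- In the associative algebra 𝔄 with generators e[i], i ∈ ℤ, and relations {e[i], e[j]} = {e[i+1], e[j-1]} for all i, j (where {a,b} = ab + ba), every product e[i_1]e[i_2]···e[i_n] with all i_s ≥ 0 can be written as a linear combination of products e[j_1]···e[j_n] with all j_s ≥ 0, j_1 = 0, and j_{s+1} ≤ j_s + 1 for all s, modulo the left ideal generated by all e[i] with i > 0 acting on a vacuum vector (i.e., in the induced module 𝔐 = ℂv ⊗_{𝔄_+} 𝔄 where v·e[i] = 0 for i > 0). -/

import Mathlib

/-- The defining relations of the algebra `𝔄`: for all `i j : ℤ`,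
`e[i]e[j] + e[j]e[i] = e[i+1]e[j-1] + e[j-1]e[i+1]` in the free associative
`ℂ`-algebra on generators `e[i]`, `i : ℤ`. -/
inductive CatalanRel : FreeAlgebra ℂ ℤ → FreeAlgebra ℂ ℤ → Prop
  | rel (i j : ℤ) : CatalanRel
      (FreeAlgebra.ι ℂ i * FreeAlgebra.ι ℂ j + FreeAlgebra.ι ℂ j * FreeAlgebra.ι ℂ i)
      (FreeAlgebra.ι ℂ (i + 1) * FreeAlgebra.ι ℂ (j - 1) +
        FreeAlgebra.ι ℂ (j - 1) * FreeAlgebra.ι ℂ (i + 1))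

/-- The algebra `𝔄` with generators `e[i]`, `i ∈ ℤ`, and relations
`{e[i], e[j]} = {e[i+1], e[j-1]}`. -/
abbrev CatalanAlg : Type := RingQuot CatalanRel

/-- The generator `e[i]` of `𝔄`. -/
noncomputable def gen (i : ℤ) : CatalanAlg :=
  RingQuot.mkAlgHom ℂ CatalanRel (FreeAlgebra.ι ℂ i)

lemma gen_rel (i j : ℤ) :
    gen i * gen j + gen j * gen i = gen (i+1) * gen (j-1) + gen (j-1) * gen (i+1) := by
  have := RingQuot.mkAlgHom_rel ℂ (CatalanRel.rel i j)
  simpa [gen, map_add, map_mul] using this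

lemma gen_rel_nat (x y : ℕ) (h : x + 2 ≤ y) :
    gen x * gen y + gen y * gen x
      = gen ((x+1 : ℕ) : ℤ) * gen ((y-1 : ℕ) : ℤ) + gen ((y-1:ℕ) : ℤ) * gen ((x+1:ℕ) : ℤ) := by
  have h1 : ((x+1:ℕ):ℤ) = (x:ℤ)+1 := by push_cast; ring
  have h2 : ((y-1:ℕ):ℤ) = (y:ℤ)-1 := by
    have : 1 ≤ y := by omega
    push_cast [this]; ring
  rw [h1, h2]; exact gen_rel x y

/-- Monomial associated to a list of nonnegative indices. -/
noncomputable def mon (l : List ℕ) : CatalanAlg := (l.map fun k : ℕ => gen k).prod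

lemma mon_nil : mon [] = 1 := rfl

lemma mon_cons (a : ℕ) (t : List ℕ) : mon (a :: t) = gen a * mon t := by
  simp [mon]

lemma mon_append (p q : List ℕ) : mon (p ++ q) = mon p * mon q := by
  simp [mon]

/-- The measure used for termination. -/
def meas : List ℕ → ℕ
  | [] => 0
  | a :: t => a + 2 * meas t

lemma meas_append (p m : List ℕ) : meas (p ++ m) = meas p + 2 ^ p.length * meas m := by
  induction p with
  | nil => simp [meas]
  | cons a t ih => simp [meas, ih, pow_succ]; ring

lemma exists_viol : ∀ l : List ℕ, ¬ List.Chain' (fun x y => y ≤ x + 1) l →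
    ∃ p x y q, l = p ++ x :: y :: q ∧ x + 2 ≤ y := by
  intro l
  induction l with
  | nil => intro h; exact absurd List.isChain_nil h
  | cons a t ih =>
    intro h
    cases t with
    | nil => exact absurd (List.isChain_singleton a) h
    | cons b t' =>
      change ¬ List.IsChain _ (a :: b :: t') at h
      change ¬ List.IsChain _ (b :: t') → _ at ih
      rw [List.isChain_cons_cons] at h
      by_cases hab : b ≤ a + 1
      · obtain ⟨p, x, y, q, heq, hxy⟩ := ih (by tauto)
        exact ⟨a :: p, x, y, q, by rw [heq]; rfl, hxy⟩
      · exact ⟨[], a, b, t', rfl, by omega⟩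

/-- Target spanning set. -/
def Tgt (n : ℕ) : Set CatalanAlg :=
  {x | ∃ l : List ℕ, l.length = n ∧ l.headI = 0 ∧ l.Chain' (fun a b => b ≤ a + 1) ∧ x = mon l}
  ∪ {x | ∃ k : ℤ, 0 < k ∧ ∃ a : CatalanAlg, x = gen k * a}

lemma key : ∀ N : ℕ, ∀ l : List ℕ, meas l < N →
    mon l ∈ Submodule.span ℂ (Tgt l.length) := by
  intro N
  induction N with
  | zero => intro l h; omega
  | succ N ih =>
    intro l hl
    cases l with
    | nil =>
      exact Submodule.subset_span (Or.inl ⟨[], rfl, rfl, List.isChain_nil, rfl⟩)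
    | cons a t =>
      rcases Nat.eq_zero_or_pos a with ha | ha
      · subst ha
        by_cases hc : List.Chain' (fun x y => y ≤ x + 1) (0 :: t)
        · exact Submodule.subset_span (Or.inl ⟨0 :: t, rfl, rfl, hc, rfl⟩)
        · obtain ⟨p, x, y, q, heq, hxy⟩ := exists_viol _ hc
          rw [heq]
          -- the three rewritten words
          have hrel := gen_rel_nat x y hxy
          have hsplit : mon (p ++ x :: y :: q)
              = mon (p ++ (x+1) :: (y-1) :: q) + mon (p ++ (y-1) :: (x+1) :: q)
                - mon (p ++ y :: x :: q) := by
            simp only [mon_append, mon_cons]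
            have h2 := congrArg (fun z => mon p * (z * mon q)) hrel
            simp only [add_mul, mul_add, mul_assoc] at h2
            rw [eq_sub_iff_add_eq]
            exact h2
          have hlen : ∀ u v : ℕ, (p ++ u :: v :: q).length = (p ++ x :: y :: q).length := by
            intro u v; simp
          have hm : meas (p ++ x :: y :: q) ≤ N := by
            rw [← heq]; omega
          have hmeas : ∀ u v : ℕ, u + 2*v < x + 2*y →
              meas (p ++ u :: v :: q) < N := by
            intro u v huv
            have h1 := meas_append p (u :: v :: q)
            have h2 := meas_append p (x :: y :: q)
            have hpos : 0 < 2 ^ p.length := Nat.pow_pos (by norm_num)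
            have : meas (u :: v :: q) < meas (x :: y :: q) := by
              simp [meas]; omega
            have := Nat.mul_lt_mul_of_pos_left this hpos
            omega
          rw [hsplit]
          have m1 := ih _ (hmeas (x+1) (y-1) (by omega))
          have m2 := ih _ (hmeas (y-1) (x+1) (by omega))
          have m3 := ih _ (hmeas y x (by omega))
          rw [hlen] at m1 m2 m3
          rw [← heq] at m1 m2 m3 ⊢
          exact Submodule.sub_mem _ (Submodule.add_mem _ m1 m2) m3
      · refine Submodule.subset_span (Or.inr ⟨(a : ℤ), by exact_mod_cast ha, mon t, ?_⟩)
        exact mon_cons a t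

/-- In the algebra `𝔄` with relations `{e[i], e[j]} = {e[i+1], e[j-1]}`, every product
`e[i_1]⋯e[i_n]` with all `i_s ≥ 0` is, modulo the right ideal generated by the `e[i]`
with `i > 0` (whose image acts as zero on the vacuum vector of the induced module
`𝔐 = ℂv ⊗_{𝔄_+} 𝔄`), a linear combination of products `e[j_1]⋯e[j_n]` with all
`j_s ≥ 0`, `j_1 = 0`, and `j_{s+1} ≤ j_s + 1` for all `s`. -/
theorem admissible_monomials_span (n : ℕ) (i : Fin n → ℕ) :
    (List.ofFn fun s => gen (i s)).prod ∈
      Submodule.span ℂ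
        ({x : CatalanAlg | ∃ j : Fin n → ℕ,
            (∀ h : 0 < n, j ⟨0, h⟩ = 0) ∧
            (∀ s : Fin n, ∀ h : (s : ℕ) + 1 < n, j ⟨(s : ℕ) + 1, h⟩ ≤ j s + 1) ∧
            x = (List.ofFn fun s => gen (j s)).prod} ∪
         {x : CatalanAlg | ∃ k : ℤ, 0 < k ∧ ∃ a : CatalanAlg, x = gen k * a}) := by
  have h1 : (List.ofFn fun s => gen (i s)).prod = mon (List.ofFn i) := by
    simp [mon, List.map_ofFn]; rfl
  rw [h1]
  have h2 := key (meas (List.ofFn i) + 1) (List.ofFn i) (by omega)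
  rw [List.length_ofFn] at h2
  refine Submodule.span_mono (fun z hz => ?_) h2
  rcases hz with ⟨l, hlen, hhead, hchain, rfl⟩ | h
  · subst hlen
    refine Or.inl ⟨l.get, ?_, ?_, ?_⟩
    · intro h
      cases l with
      | nil => simp at h
      | cons a t => simpa using hhead
    · intro s hs
      have := List.isChain_iff_getElem.mp hchain s (by omega)
      exact this
    · rw [show (List.ofFn fun s => gen ((l.get s : ℕ) : ℤ))
            = (List.ofFn l.get).map (fun k : ℕ => gen (k : ℤ)) from (List.map_ofFn (f := l.get) (g := fun k : ℕ => gen (k : ℤ))).symm,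
        List.ofFn_get]
      rfl
  · exact Or.inr h
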